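/- arXiv:1810.02510 — 2 statements merged into one kernel-verified Lean document; each statement's English description precedes it below -/
import Mathlib

section
/- Let M ≥ 2 be an integer, ζ ∈ (0, 2/M], and suppose |cos φ − cos(φ − Δφ)| ≤ ζ with |Δφ| ≤ ζ. Then the beamforming gain magnitude |c| = (1/√M)|sin((M/2)π(cos φ − cos(φ−Δφ)))/sin((π/2)(cos φ − cos(φ−Δφ)))| satisfies |c| ≥ √M · sinc((M/2)πζ), where sinc(t) = sin(t)/t (sinc(0)=1). -/
open Real

/-- `sinc t = sin t / t` for `t ≠ 0`, `sinc 0 = 1`. -/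
noncomputable def sinc (t : ℝ) : ℝ := if t = 0 then 1 else Real.sin t / t

lemma my_abs_exp_I_sub_one (x : ℝ) :
    ‖Complex.exp (Complex.I * x) - 1‖ = 2 * |Real.sin (x / 2)| := by
  have h : Complex.exp (Complex.I * x) - 1
      = ((Real.cos x - 1 : ℝ) : ℂ) + ((Real.sin x : ℝ) : ℂ) * Complex.I := by
    rw [show Complex.I * (x : ℂ) = (x : ℂ) * Complex.I by ring, Complex.exp_mul_I]
    push_cast
    ring
  rw [h, Complex.norm_def, Complex.normSq_add_mul_I]
  have key : (Real.cos x - 1) ^ 2 + Real.sin x ^ 2 = (2 * |Real.sin (x / 2)|) ^ 2 := by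
    have h1 := Real.sin_sq_add_cos_sq x
    have h2 := Real.sin_sq_add_cos_sq (x / 2)
    have h3 : Real.cos (2 * (x / 2)) = 2 * Real.cos (x / 2) ^ 2 - 1 := Real.cos_two_mul _
    have h4 : (2 : ℝ) * (x / 2) = x := by ring
    rw [h4] at h3
    have h5 : |Real.sin (x / 2)| ^ 2 = Real.sin (x / 2) ^ 2 := sq_abs _
    nlinarith
  rw [key, Real.sqrt_sq (by positivity)]

lemma my_mul_cos_le_sin {x : ℝ} (h0 : 0 ≤ x) (hpi : x ≤ π) : x * Real.cos x ≤ Real.sin x := by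
  rcases le_or_gt (Real.cos x) 0 with hc | hc
  · have : x * Real.cos x ≤ 0 := mul_nonpos_of_nonneg_of_nonpos h0 hc
    exact this.trans (Real.sin_nonneg_of_nonneg_of_le_pi h0 hpi)
  · have hx2 : x < π / 2 := by
      by_contra h
      push_neg at h
      have := Real.cos_nonpos_of_pi_div_two_le_of_le h (by linarith [Real.pi_pos])
      linarith
    rcases eq_or_lt_of_le h0 with h0' | h0'
    · simp [← h0']
    · have ht := Real.lt_tan h0' hx2
      rw [Real.tan_eq_sin_div_cos] at ht
      calc x * Real.cos x ≤ (Real.sin x / Real.cos x) * Real.cos x :=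
            mul_le_mul_of_nonneg_right ht.le hc.le
        _ = Real.sin x := by field_simp

lemma my_sinc_anti {a b : ℝ} (ha : 0 < a) (hab : a ≤ b) (hb : b ≤ π) :
    Real.sin b / b ≤ Real.sin a / a := by
  have H : AntitoneOn (fun t => Real.sin t / t) (Set.Icc a b) := by
    have hne : ∀ x ∈ Set.Icc a b, x ≠ 0 := fun x hx => ne_of_gt (lt_of_lt_of_le ha hx.1)
    apply antitoneOn_of_deriv_nonpos (convex_Icc a b)
    · exact Real.continuousOn_sin.div continuousOn_id hne
    · intro x hx
      rw [interior_Icc] at hx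
      have hx0 : x ≠ 0 := ne_of_gt (lt_of_lt_of_le ha hx.1.le)
      exact ((Real.hasDerivAt_sin x).div (hasDerivAt_id x) hx0).differentiableAt.differentiableWithinAt
    · intro x hx
      rw [interior_Icc] at hx
      have hx0 : (0:ℝ) < x := lt_of_lt_of_le ha hx.1.le
      have hd : HasDerivAt (fun t => Real.sin t / t)
          ((Real.cos x * x - Real.sin x * 1) / x ^ 2) x := by
        exact (Real.hasDerivAt_sin x).div (hasDerivAt_id x) (ne_of_gt hx0)
      rw [hd.deriv]
      apply div_nonpos_of_nonpos_of_nonneg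
      · have := my_mul_cos_le_sin hx0.le (le_trans hx.2.le hb)
        nlinarith
      · positivity
  exact H ⟨le_rfl, hab⟩ ⟨hab, le_rfl⟩ hab

lemma my_abs_sin_eq {x : ℝ} (h : |x| ≤ π) : |Real.sin x| = Real.sin |x| := by
  rcases le_or_gt 0 x with hx | hx
  · rw [abs_of_nonneg hx]
    exact abs_of_nonneg (Real.sin_nonneg_of_nonneg_of_le_pi hx (by rwa [abs_of_nonneg hx] at h))
  · rw [abs_of_neg hx]
    have hnn : 0 ≤ Real.sin (-x) :=
      Real.sin_nonneg_of_nonneg_of_le_pi (by linarith) (by rwa [abs_of_neg hx] at h)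
    rw [← abs_neg, ← Real.sin_neg, abs_of_nonneg hnn]

/-- Lower bound on the beamforming gain magnitude: with `M ≥ 2`, `ζ ∈ (0, 2/M]`,
`|Δφ| ≤ ζ` and `|cos φ − cos (φ − Δφ)| ≤ ζ`, the gain
`c = (1/√M) ∑_{n<M} exp (i n π (cos φ − cos (φ − Δφ)))`
satisfies `|c| ≥ √M · sinc (Mπζ/2)`. -/
theorem stmt4 (M : ℕ) (hM : 2 ≤ M) (ζ φ Δφ : ℝ) (hζ0 : 0 < ζ) (hζ : ζ ≤ 2 / M)
    (hΔ : |Δφ| ≤ ζ) (hδ : |Real.cos φ - Real.cos (φ - Δφ)| ≤ ζ) :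
    (1 / Real.sqrt M) * ‖(∑ n ∈ Finset.range M,
        Complex.exp (Complex.I * n * π * (Real.cos φ - Real.cos (φ - Δφ))))‖
      ≥ Real.sqrt M * _root_.sinc (M * π * ζ / 2) := by
  have hπ := Real.pi_pos
  have hMpos : (0:ℝ) < M := by
    have : (2:ℝ) ≤ M := by exact_mod_cast hM
    linarith
  have hM2 : (2:ℝ) ≤ M := by exact_mod_cast hM
  have hζ1 : ζ ≤ 1 := le_trans hζ (by rw [div_le_one hMpos]; linarith)
  set δ := Real.cos φ - Real.cos (φ - Δφ) with hδdef
  have hb0 : (0:ℝ) < (M:ℝ) * π * ζ / 2 := by positivity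
  have hbπ : (M:ℝ) * π * ζ / 2 ≤ π := by
    have hMζ : (M:ℝ) * ζ ≤ 2 := by
      have := (le_div_iff₀ hMpos).mp hζ
      linarith
    nlinarith
  have hsinc : _root_.sinc ((M:ℝ) * π * ζ / 2) = Real.sin ((M:ℝ) * π * ζ / 2) / ((M:ℝ) * π * ζ / 2) :=
    if_neg (ne_of_gt hb0)
  have hsqrt_pos : 0 < Real.sqrt M := Real.sqrt_pos.mpr hMpos
  have hsqrt_mul : (1 / Real.sqrt M) * M = Real.sqrt M := by
    rw [one_div, inv_mul_eq_div, Real.div_sqrt]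
  have hsinc_le_one : _root_.sinc ((M:ℝ) * π * ζ / 2) ≤ 1 := by
    rw [hsinc, div_le_one hb0]
    exact Real.sin_le hb0.le
  by_cases h0 : δ = 0
  · have hcast : ((Real.cos φ : ℂ) - (Real.cos (φ - Δφ) : ℂ)) = 0 := by
      rw [← Complex.ofReal_sub, ← hδdef, h0, Complex.ofReal_zero]
    rw [Finset.sum_congr rfl (fun n _ => by
      rw [hcast, mul_zero, Complex.exp_zero] :
      ∀ n ∈ Finset.range M, Complex.exp (Complex.I * n * π *
        ((Real.cos φ : ℂ) - (Real.cos (φ - Δφ) : ℂ))) = 1)]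
    rw [Finset.sum_const, Finset.card_range, nsmul_eq_mul, mul_one, Complex.norm_natCast]
    calc Real.sqrt M * _root_.sinc ((M:ℝ) * π * ζ / 2) ≤ Real.sqrt M * 1 := by
          exact mul_le_mul_of_nonneg_left hsinc_le_one hsqrt_pos.le
      _ = Real.sqrt M := by ring
      _ = (1 / Real.sqrt M) * M := hsqrt_mul.symm
  · -- δ ≠ 0
    set x := Complex.exp (Complex.I * ((π * δ : ℝ) : ℂ)) with hxdef
    have hterm : ∀ n ∈ Finset.range M,
        Complex.exp (Complex.I * n * π * ((Real.cos φ : ℂ) - (Real.cos (φ - Δφ) : ℂ)))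
          = x ^ n := by
      intro n _
      rw [hxdef, ← Complex.exp_nat_mul]
      congr 1
      push_cast [hδdef]
      ring
    rw [Finset.sum_congr rfl hterm]
    have hxne : x ≠ 1 := by
      intro h
      rw [hxdef, Complex.exp_eq_one_iff] at h
      obtain ⟨n, hn⟩ := h
      have him : π * δ = n * (2 * π) := by
        have := congrArg Complex.im hn
        simpa using this
      have hδ2n : δ = 2 * n := by
        have hπne : (π : ℝ) ≠ 0 := ne_of_gt hπ
        field_simp at him
        nlinarith [him]
      have hn0 : n ≠ 0 := by
        intro hn0
        apply h0
        rw [hδ2n, hn0]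
        simp
      have h1n : (1:ℝ) ≤ |(n:ℝ)| := by
        have : 1 ≤ |n| := Int.one_le_abs hn0
        exact_mod_cast this
      have : |δ| = 2 * |(n:ℝ)| := by rw [hδ2n, abs_mul, abs_two]
      rw [this] at hδ
      linarith
    rw [geom_sum_eq hxne, norm_div]
    have hxM : x ^ M = Complex.exp (Complex.I * (((M:ℝ) * π * δ : ℝ) : ℂ)) := by
      rw [hxdef, ← Complex.exp_nat_mul]
      congr 1
      push_cast
      ring
    rw [hxM, my_abs_exp_I_sub_one, hxdef, my_abs_exp_I_sub_one]
    -- now reals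
    set d := |δ| with hddef
    have hd0 : 0 < d := abs_pos.mpr h0
    have hdζ : d ≤ ζ := hδ
    have habs1 : |Real.sin ((M:ℝ) * π * δ / 2)| = Real.sin ((M:ℝ) * π * d / 2) := by
      have harg : |(M:ℝ) * π * δ / 2| = (M:ℝ) * π * d / 2 := by
        rw [abs_div, abs_mul, abs_mul, abs_of_pos hMpos, abs_of_pos hπ, hddef, abs_two]
      have hle : |(M:ℝ) * π * δ / 2| ≤ π := by
        rw [harg]
        have : (M:ℝ) * π * d / 2 ≤ (M:ℝ) * π * ζ / 2 := by gcongr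
        linarith
      rw [my_abs_sin_eq hle, harg]
    have habs2 : |Real.sin (π * δ / 2)| = Real.sin (π * d / 2) := by
      have harg : |π * δ / 2| = π * d / 2 := by
        rw [abs_div, abs_mul, abs_of_pos hπ, hddef, abs_two]
      have hle : |π * δ / 2| ≤ π := by
        rw [harg]
        have hd1 : d ≤ 1 := hdζ.trans hζ1
        nlinarith [hπ, hd1]
      rw [my_abs_sin_eq hle, harg]
    rw [habs1, habs2]
    have hden_pos : 0 < Real.sin (π * d / 2) := by
      apply Real.sin_pos_of_pos_of_lt_pi (by positivity)
      have hd1 : d ≤ 1 := hdζ.trans hζ1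
      nlinarith [hπ, hd1]
    have hden_le : Real.sin (π * d / 2) ≤ π * d / 2 := Real.sin_le (by positivity)
    set t := (M:ℝ) * π * d / 2 with htdef
    have ht0 : 0 < t := by positivity
    have htb : t ≤ (M:ℝ) * π * ζ / 2 := by rw [htdef]; gcongr
    have hnum_nonneg : 0 ≤ Real.sin t := by
      apply Real.sin_nonneg_of_nonneg_of_le_pi ht0.le
      linarith
    have hkey : (M:ℝ) * (Real.sin ((M:ℝ) * π * ζ / 2) / ((M:ℝ) * π * ζ / 2))
        ≤ 2 * Real.sin t / (2 * Real.sin (π * d / 2)) := by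
      have step1 : Real.sin ((M:ℝ) * π * ζ / 2) / ((M:ℝ) * π * ζ / 2) ≤ Real.sin t / t :=
        my_sinc_anti ht0 htb hbπ
      have step2 : (M:ℝ) * (Real.sin t / t) = Real.sin t / (π * d / 2) := by
        rw [htdef]
        field_simp
      have step3 : Real.sin t / (π * d / 2) ≤ Real.sin t / Real.sin (π * d / 2) :=
        div_le_div_of_nonneg_left hnum_nonneg hden_pos hden_le
      have step4 : Real.sin t / Real.sin (π * d / 2)
          = 2 * Real.sin t / (2 * Real.sin (π * d / 2)) := by
        rw [mul_div_mul_left _ _ (two_ne_zero)]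
      calc (M:ℝ) * (Real.sin ((M:ℝ) * π * ζ / 2) / ((M:ℝ) * π * ζ / 2))
          ≤ (M:ℝ) * (Real.sin t / t) := by
            exact mul_le_mul_of_nonneg_left step1 hMpos.le
        _ = Real.sin t / (π * d / 2) := step2
        _ ≤ Real.sin t / Real.sin (π * d / 2) := step3
        _ = 2 * Real.sin t / (2 * Real.sin (π * d / 2)) := step4
    rw [ge_iff_le, hsinc]
    calc Real.sqrt M * (Real.sin ((M:ℝ) * π * ζ / 2) / ((M:ℝ) * π * ζ / 2))
        = (1 / Real.sqrt M) * ((M:ℝ) * (Real.sin ((M:ℝ) * π * ζ / 2) / ((M:ℝ) * π * ζ / 2))) := by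
          rw [← mul_assoc, mul_comm (1 / Real.sqrt M) (M:ℝ), mul_assoc]
          rw [mul_comm (M:ℝ) (1 / Real.sqrt M), hsqrt_mul]
      _ ≤ (1 / Real.sqrt M) * (2 * Real.sin t / (2 * Real.sin (π * d / 2))) := by
          exact mul_le_mul_of_nonneg_left hkey (by positivity)
end

section
/- Let θ, θ', θ'' be mutually independent uniform [0,π] random variables and h(θ) = (e^{j n π cos θ})_{n=0}^{N−1}. Then E[ h(θ)^H h(θ') · h(θ')^H h(θ'') ] = Σ_{n=0}^{N−1} J_0(nπ)^2 + 2 Σ_{m=1}^{N−1} Σ_{n=0}^{N−m−1} J_0(mπ) J_0(nπ) J_0((n+m)π). -/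
open Real MeasureTheory

/-- Bessel function of the first kind of order zero. -/
noncomputable def J0 (z : ℝ) : ℝ := (1 / π) * ∫ x in (0:ℝ)..π, Real.cos (z * Real.cos x)

noncomputable def Eg (a : ℝ) (x : ℝ) : ℂ := Complex.exp (Complex.I * a * Real.cos x)

@[fun_prop] lemma contE (a : ℝ) : Continuous (Eg a) := by unfold Eg; fun_prop

lemma J0_neg (z : ℝ) : J0 (-z) = J0 z := by
  unfold J0; congr 1; apply intervalIntegral.integral_congr; intro x _; simp [neg_mul]

lemma J0_zero : J0 0 = 1 := by
  unfold J0; simp [Real.pi_ne_zero]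

lemma sin_int_zero (a : ℝ) : ∫ x in (0:ℝ)..π, Real.sin (a * Real.cos x) = 0 := by
  have h := intervalIntegral.integral_comp_sub_left (a := 0) (b := π)
    (fun x => Real.sin (a * Real.cos x)) π
  simp [Real.cos_pi_sub, mul_neg, Real.sin_neg, intervalIntegral.integral_neg] at h
  linarith

lemma K_eq (a : ℝ) : ∫ x in (0:ℝ)..π, Eg a x = ((π * J0 a : ℝ) : ℂ) := by
  have h1 : ∀ x : ℝ, Eg a x =
      ((Real.cos (a * Real.cos x) : ℝ) : ℂ) + ((Real.sin (a * Real.cos x) : ℝ) : ℂ) * Complex.I := by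
    intro x
    unfold Eg
    rw [show Complex.I * a * Real.cos x = ((a * Real.cos x : ℝ) : ℂ) * Complex.I by push_cast; ring,
      Complex.exp_mul_I, Complex.ofReal_cos, Complex.ofReal_sin]
  simp only [h1]
  rw [intervalIntegral.integral_add (Continuous.intervalIntegrable (by fun_prop) _ _)
      (Continuous.intervalIntegrable (by fun_prop) _ _),
    intervalIntegral.integral_mul_const, intervalIntegral.integral_ofReal,
    intervalIntegral.integral_ofReal, sin_int_zero]
  simp only [Complex.ofReal_zero, zero_mul, add_zero]
  norm_cast
  rw [J0]
  field_simp

lemma sum_sym (N : ℕ) (f : ℕ → ℕ → ℝ) (hf : ∀ n m, f n m = f m n) :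
    ∑ n ∈ Finset.range N, ∑ m ∈ Finset.range N, f n m
      = ∑ n ∈ Finset.range N, f n n
        + 2 * ∑ m ∈ Finset.Ico 1 N, ∑ n ∈ Finset.range (N - m), f n (n + m) := by
  induction N with
  | zero => simp
  | succ N ih =>
    rcases Nat.eq_zero_or_pos N with h0 | hN
    · subst h0; simp
    have hL : ∑ n ∈ Finset.range (N+1), ∑ m ∈ Finset.range (N+1), f n m
        = (∑ n ∈ Finset.range N, ∑ m ∈ Finset.range N, f n m)
          + (∑ n ∈ Finset.range N, f n N) + (∑ m ∈ Finset.range N, f N m) + f N N := by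
      rw [Finset.sum_range_succ]
      rw [Finset.sum_range_succ (f := fun m => f N m)]
      have : ∑ n ∈ Finset.range N, ∑ m ∈ Finset.range (N+1), f n m
          = (∑ n ∈ Finset.range N, ∑ m ∈ Finset.range N, f n m)
            + ∑ n ∈ Finset.range N, f n N := by
        rw [← Finset.sum_add_distrib]
        exact Finset.sum_congr rfl fun n _ => Finset.sum_range_succ _ _
      rw [this]; ring
    have hD : ∑ m ∈ Finset.Ico 1 (N+1), ∑ n ∈ Finset.range (N+1-m), f n (n+m)
        = (∑ m ∈ Finset.Ico 1 N, ∑ n ∈ Finset.range (N-m), f n (n+m))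
          + ∑ k ∈ Finset.range N, f k N := by
      rw [Finset.sum_Ico_succ_top hN]
      have h1 : ∀ m ∈ Finset.Ico 1 N, ∑ n ∈ Finset.range (N+1-m), f n (n+m)
          = (∑ n ∈ Finset.range (N-m), f n (n+m)) + f (N-m) N := by
        intro m hm
        simp only [Finset.mem_Ico] at hm
        have : N + 1 - m = (N - m) + 1 := by omega
        rw [this, Finset.sum_range_succ]
        congr 2
        omega
      rw [Finset.sum_congr rfl h1, Finset.sum_add_distrib]
      have h2 : ∑ n ∈ Finset.range (N+1-N), f n (n+N) = f 0 N := by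
        have : N + 1 - N = 1 := by omega
        simp [this]
      rw [h2]
      have h3 : (∑ m ∈ Finset.Ico 1 N, f (N-m) N) + f 0 N = ∑ k ∈ Finset.range N, f k N := by
        have h4 : ∑ m ∈ Finset.Ico 1 N, f (N-m) N = ∑ k ∈ Finset.Ico 1 N, f k N := by
          rw [Finset.sum_Ico_eq_sum_range, Finset.sum_Ico_eq_sum_range,
            ← Finset.sum_range_reflect]
          exact Finset.sum_congr rfl fun j hj => by
            simp only [Finset.mem_range] at hj; congr 1; omega
        rw [h4]
        rw [Finset.range_eq_Ico, Finset.sum_eq_sum_Ico_succ_bot hN]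
        ring
      linarith
    rw [hL, hD, Finset.sum_range_succ (f := fun n => f n n), ih]
    have : ∑ m ∈ Finset.range N, f N m = ∑ m ∈ Finset.range N, f m N :=
      Finset.sum_congr rfl fun m _ => hf N m
    rw [this]; ring


set_option maxHeartbeats 1000000 in
/-- For mutually independent `θ, θ', θ''` uniform on `[0, π]` and
`h(θ) = (e^{i n π cos θ})_{n<N}`,
`E[h(θ)ᴴ h(θ') · h(θ')ᴴ h(θ'')] = ∑_{n<N} J₀(nπ)²
  + 2 ∑_{m=1}^{N−1} ∑_{n=0}^{N−m−1} J₀(mπ) J₀(nπ) J₀((n+m)π)`. -/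
theorem stmt7 (N : ℕ) :
    (1 / (π : ℂ)^3) * ∫ θ in (0:ℝ)..π, ∫ θ' in (0:ℝ)..π, ∫ θ'' in (0:ℝ)..π,
        (∑ n ∈ Finset.range N,
            Complex.exp (Complex.I * n * π * (Real.cos θ' - Real.cos θ))) *
        (∑ m ∈ Finset.range N,
            Complex.exp (Complex.I * m * π * (Real.cos θ'' - Real.cos θ')))
      = ((∑ n ∈ Finset.range N, (J0 (n * π))^2
          + 2 * ∑ m ∈ Finset.Ico 1 N, ∑ n ∈ Finset.range (N - m),
              J0 (m * π) * J0 (n * π) * J0 ((n + m) * π) : ℝ) : ℂ) := by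
  have hπ : (π:ℝ) ≠ 0 := Real.pi_ne_zero
  have esplit : ∀ (n : ℕ) (x y : ℝ),
      Complex.exp (Complex.I * n * π * (Real.cos x - Real.cos y))
        = Eg (-(n*π)) y * Eg (n*π) x := by
    intro n x y; unfold Eg; rw [← Complex.exp_add]; congr 1; push_cast; ring
  have emul : ∀ (a b : ℝ) (x : ℝ), Eg a x * Eg b x = Eg (a+b) x := by
    intro a b x; unfold Eg; rw [← Complex.exp_add]; congr 1; push_cast; ring
  simp only [esplit]
  -- innermost integral
  have h1 : ∀ θ θ' : ℝ,
      (∫ θ'' in (0:ℝ)..π,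
        (∑ n ∈ Finset.range N, Eg (-(n*π)) θ * Eg (n*π) θ') *
        (∑ m ∈ Finset.range N, Eg (-(m*π)) θ' * Eg (m*π) θ''))
      = (∑ n ∈ Finset.range N, Eg (-(n*π)) θ * Eg (n*π) θ') *
        (∑ m ∈ Finset.range N, Eg (-(m*π)) θ' * ((π * J0 (m*π) : ℝ) : ℂ)) := by
    intro θ θ'
    rw [intervalIntegral.integral_const_mul]
    congr 1
    rw [intervalIntegral.integral_finset_sum (fun m _ =>
      Continuous.intervalIntegrable (by fun_prop) _ _)]
    exact Finset.sum_congr rfl fun m _ => by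
      rw [intervalIntegral.integral_const_mul, K_eq]
  simp only [h1]
  -- middle integral
  have h2 : ∀ θ : ℝ,
      (∫ θ' in (0:ℝ)..π,
        (∑ n ∈ Finset.range N, Eg (-(n*π)) θ * Eg (n*π) θ') *
        (∑ m ∈ Finset.range N, Eg (-(m*π)) θ' * ((π * J0 (m*π) : ℝ) : ℂ)))
      = ∑ p ∈ Finset.range N ×ˢ Finset.range N,
          (Eg (-(p.1*π)) θ * ((π * J0 (p.2*π) : ℝ) : ℂ)) *
            ((π * J0 (((p.1:ℝ) - p.2)*π) : ℝ) : ℂ) := by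
    intro θ
    have expand : ∀ θ' : ℝ,
        (∑ n ∈ Finset.range N, Eg (-(n*π)) θ * Eg (n*π) θ') *
        (∑ m ∈ Finset.range N, Eg (-(m*π)) θ' * ((π * J0 (m*π) : ℝ) : ℂ))
        = ∑ p ∈ Finset.range N ×ˢ Finset.range N,
            (Eg (-(p.1*π)) θ * ((π * J0 (p.2*π) : ℝ) : ℂ)) * Eg (((p.1:ℝ) - p.2)*π) θ' := by
      intro θ'
      rw [Finset.sum_mul_sum, Finset.sum_product]
      refine Finset.sum_congr rfl fun n _ => Finset.sum_congr rfl fun m _ => ?_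
      rw [show ((n:ℝ) - m)*π = (n*π) + (-(m*π)) by ring, ← emul]
      ring
    simp only [expand]
    rw [intervalIntegral.integral_finset_sum (fun p _ =>
      Continuous.intervalIntegrable (by fun_prop) _ _)]
    exact Finset.sum_congr rfl fun p _ => by
      rw [intervalIntegral.integral_const_mul, K_eq]
  simp only [h2]
  -- outer integral
  have h3 :
      (∫ θ in (0:ℝ)..π, ∑ p ∈ Finset.range N ×ˢ Finset.range N,
          (Eg (-(p.1*π)) θ * ((π * J0 (p.2*π) : ℝ) : ℂ)) *
            ((π * J0 (((p.1:ℝ) - p.2)*π) : ℝ) : ℂ))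
      = ∑ p ∈ Finset.range N ×ˢ Finset.range N,
          ((π * J0 (p.1*π) : ℝ) : ℂ) * ((π * J0 (p.2*π) : ℝ) : ℂ) *
            ((π * J0 (((p.1:ℝ) - p.2)*π) : ℝ) : ℂ) := by
    have rw1 : ∀ (p : ℕ × ℕ) (θ : ℝ),
        (Eg (-(p.1*π)) θ * ((π * J0 (p.2*π) : ℝ) : ℂ)) * ((π * J0 (((p.1:ℝ) - p.2)*π) : ℝ) : ℂ)
        = (((π * J0 (p.2*π) : ℝ) : ℂ) * ((π * J0 (((p.1:ℝ) - p.2)*π) : ℝ) : ℂ)) *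
            Eg (-(p.1*π)) θ := by intro p θ; ring
    simp only [rw1]
    rw [intervalIntegral.integral_finset_sum (fun p _ =>
      Continuous.intervalIntegrable (by fun_prop) _ _)]
    refine Finset.sum_congr rfl fun p _ => ?_
    rw [intervalIntegral.integral_const_mul, K_eq, J0_neg]
    ring
  rw [h3, Finset.sum_product]
  -- now pure algebra over casts
  have key : ∑ n ∈ Finset.range N, ∑ m ∈ Finset.range N,
      (π * J0 (n*π)) * (π * J0 (m*π)) * (π * J0 (((n:ℝ) - m)*π))
      = π^3 * (∑ n ∈ Finset.range N, (J0 (n * π))^2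
          + 2 * ∑ m ∈ Finset.Ico 1 N, ∑ n ∈ Finset.range (N - m),
              J0 (m * π) * J0 (n * π) * J0 ((n + m) * π)) := by
    have hsym := sum_sym N (fun n m => J0 (n*π) * J0 (m*π) * J0 (((n:ℝ) - m)*π))
      (fun n m => by
        simp only [show ((m:ℝ) - n) * π = -(((n:ℝ) - m) * π) by ring, J0_neg]
        ring)
    have e1 : ∑ n ∈ Finset.range N, ∑ m ∈ Finset.range N,
        (π * J0 (n*π)) * (π * J0 (m*π)) * (π * J0 (((n:ℝ) - m)*π))
        = π^3 * ∑ n ∈ Finset.range N, ∑ m ∈ Finset.range N,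
            J0 (n*π) * J0 (m*π) * J0 (((n:ℝ) - m)*π) := by
      rw [Finset.mul_sum]
      refine Finset.sum_congr rfl fun n _ => ?_
      rw [Finset.mul_sum]
      exact Finset.sum_congr rfl fun m _ => by ring
    rw [e1, hsym]
    congr 1
    congr 1
    · exact Finset.sum_congr rfl fun n _ => by
        simp [show ((n:ℝ) - n) * π = 0 by ring, J0_zero]; ring
    congr 1
    refine Finset.sum_congr rfl fun m hm => Finset.sum_congr rfl fun n _ => ?_
    simp only [Nat.cast_add, show ((n:ℝ) - (n + m)) * π = -((m:ℝ)*π) by ring, J0_neg]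
    ring
  calc (1 / (π : ℂ)^3) * ∑ n ∈ Finset.range N, ∑ m ∈ Finset.range N,
        ((π * J0 (n*π) : ℝ) : ℂ) * ((π * J0 (m*π) : ℝ) : ℂ) *
          ((π * J0 (((n:ℝ) - m)*π) : ℝ) : ℂ)
      = (1 / (π : ℂ)^3) * ((∑ n ∈ Finset.range N, ∑ m ∈ Finset.range N,
          (π * J0 (n*π)) * (π * J0 (m*π)) * (π * J0 (((n:ℝ) - m)*π)) : ℝ) : ℂ) := by
        push_cast; ring
    _ = _ := by
        rw [key]
        push_cast
        have : ((π:ℝ):ℂ) ≠ 0 := by exact_mod_cast hπ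
        field_simp
        simp only [mul_comm (π:ℝ)]
end
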